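/- Under the abstract variational framework, let γ₁, γ₂ : X → ℝ be bounded measurable with γ₁ ≥ 0 μ-a.e., let ℓ : V → ℝ be a linear functional, and let u₁, u₂ ∈ V be weak solutions for (γ₁, ℓ) and (γ₂, ℓ) respectively. Then ∫_X (γ₁ − γ₂)·(Tu₂)² dμ ≥ ℓ(u₂) − ℓ(u₁). (This is the first inequality of the monotonicity estimate, Lemma 4.1: ∫_Γ (γ₁ − γ₂) u₂² ds ≥ ∫_{∂Ω} g (Λ(γ₂) − Λ(γ₁)) g ds.) -/

import Mathlib

open MeasureTheory

lemma aux_integrable_mul {X : Type*} [MeasurableSpace X] {μ : Measure X}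
    {f g : X → ℝ} (hf : MemLp f 2 μ) (hg : MemLp g 2 μ) :
    Integrable (fun x => f x * g x) μ := by
  have h := L2.integrable_inner (𝕜 := ℝ) (hf.toLp f) (hg.toLp g)
  refine h.congr ?_
  filter_upwards [hf.coeFn_toLp, hg.coeFn_toLp] with x hx hy
  simp [hx, hy, RCLike.inner_apply, mul_comm]

lemma aux_integrable_gmul {X : Type*} [MeasurableSpace X] {μ : Measure X}
    {γ f g : X → ℝ} (hγm : Measurable γ) (hγb : ∃ C, ∀ x, |γ x| ≤ C)
    (hf : MemLp f 2 μ) (hg : MemLp g 2 μ) :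
    Integrable (fun x => γ x * f x * g x) μ := by
  obtain ⟨C, hC⟩ := hγb
  have h := (aux_integrable_mul hf hg).bdd_mul hγm.aestronglyMeasurable
    (Filter.Eventually.of_forall fun x => by simpa using hC x)
  simpa [mul_assoc] using h

/-- First inequality of the monotonicity estimate (Lemma 4.1):
`∫_X (γ₁ − γ₂)(Tu₂)² dμ ≥ ℓ(u₂) − ℓ(u₁)`. -/
theorem monotonicity_estimate_first
    {V : Type*} [AddCommGroup V] [Module ℝ V]
    {X : Type*} [MeasurableSpace X] {μ : Measure X}
    (a : V → V → ℝ)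
    (ha_symm : ∀ v w, a v w = a w v)
    (ha_add : ∀ u v w, a (u + v) w = a u w + a v w)
    (ha_smul : ∀ (c : ℝ) (v w : V), a (c • v) w = c * a v w)
    (ha_nonneg : ∀ v, 0 ≤ a v v)
    (T : V →ₗ[ℝ] (X → ℝ))
    (hT : ∀ v, MemLp (T v) 2 μ)
    (γ₁ γ₂ : X → ℝ)
    (hγ₁m : Measurable γ₁) (hγ₂m : Measurable γ₂)
    (hγ₁b : ∃ C, ∀ x, |γ₁ x| ≤ C) (hγ₂b : ∃ C, ∀ x, |γ₂ x| ≤ C)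
    (hγ₁0 : ∀ᵐ x ∂μ, 0 ≤ γ₁ x)
    (ℓ : V →ₗ[ℝ] ℝ)
    (u₁ u₂ : V)
    (hu₁ : ∀ w, a u₁ w + ∫ x, γ₁ x * T u₁ x * T w x ∂μ = ℓ w)
    (hu₂ : ∀ w, a u₂ w + ∫ x, γ₂ x * T u₂ x * T w x ∂μ = ℓ w) :
    ∫ x, (γ₁ x - γ₂ x) * (T u₂ x) ^ 2 ∂μ ≥ ℓ u₂ - ℓ u₁ := by
  set f : X → ℝ := T u₁ with hf
  set g : X → ℝ := T u₂ with hg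
  -- integrability facts
  have I11 : Integrable (fun x => γ₁ x * f x * f x) μ :=
    aux_integrable_gmul hγ₁m hγ₁b (hT u₁) (hT u₁)
  have I12 : Integrable (fun x => γ₁ x * f x * g x) μ :=
    aux_integrable_gmul hγ₁m hγ₁b (hT u₁) (hT u₂)
  have I22 : Integrable (fun x => γ₁ x * g x * g x) μ :=
    aux_integrable_gmul hγ₁m hγ₁b (hT u₂) (hT u₂)
  have J22 : Integrable (fun x => γ₂ x * g x * g x) μ :=
    aux_integrable_gmul hγ₂m hγ₂b (hT u₂) (hT u₂)
  -- bilinear form algebra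
  have ha_neg : ∀ v w : V, a (-v) w = - a v w := by
    intro v w
    have := ha_smul (-1) v w
    simpa using this
  have ha_sub : ∀ u v w : V, a (u - v) w = a u w - a v w := by
    intro u v w
    rw [sub_eq_add_neg, ha_add, ha_neg, ← sub_eq_add_neg]
  have hdiag : a (u₁ - u₂) (u₁ - u₂)
      = a u₁ u₁ - 2 * a u₁ u₂ + a u₂ u₂ := by
    rw [ha_sub, ha_symm u₁ (u₁ - u₂), ha_symm u₂ (u₁ - u₂), ha_sub, ha_sub,
      ha_symm u₂ u₁]
    ring
  -- nonnegativity of the key quantity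
  have hkey : 0 ≤ a (u₁ - u₂) (u₁ - u₂) + ∫ x, γ₁ x * (f x - g x) ^ 2 ∂μ := by
    refine add_nonneg (ha_nonneg _) (integral_nonneg_of_ae ?_)
    filter_upwards [hγ₁0] with x hx
    positivity
  -- expand the square integral
  have hIexp : ∫ x, γ₁ x * (f x - g x) ^ 2 ∂μ
      = (∫ x, γ₁ x * f x * f x ∂μ) - 2 * (∫ x, γ₁ x * f x * g x ∂μ)
        + ∫ x, γ₁ x * g x * g x ∂μ := by
    have hfun : (fun x => γ₁ x * (f x - g x) ^ 2)
        = fun x => (γ₁ x * f x * f x - 2 * (γ₁ x * f x * g x))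
          + γ₁ x * g x * g x := by
      funext x; ring
    have Isub : Integrable (fun x => γ₁ x * f x * f x - 2 * (γ₁ x * f x * g x)) μ :=
      I11.sub (I12.const_mul 2)
    rw [hfun, integral_add Isub I22, integral_sub I11 (I12.const_mul 2),
      MeasureTheory.integral_const_mul]
  -- expand the goal integral
  have hGexp : ∫ x, (γ₁ x - γ₂ x) * (g x) ^ 2 ∂μ
      = (∫ x, γ₁ x * g x * g x ∂μ) - ∫ x, γ₂ x * g x * g x ∂μ := by
    have hfun : (fun x => (γ₁ x - γ₂ x) * (g x) ^ 2)
        = fun x => γ₁ x * g x * g x - γ₂ x * g x * g x := by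
      funext x; ring
    rw [hfun, integral_sub I22 J22]
  have h11 := hu₁ u₁
  have h12 := hu₁ u₂
  have h22 := hu₂ u₂
  simp only [← hg] at h12 h22
  linarith [hkey, hdiag, hIexp, hGexp, h11, h12, h22]
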